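/- On pairs (k,f) ∈ ℤ × ℂ[X] (representing the differential operator t^k f(D)), define the bracket [(k₁,f),(k₂,g)] = (k₁+k₂, f(X+k₂)·g(X) − g(X+k₁)·f(X)), and define Ψ : (ℤ × ℂ[X]) × (ℤ × ℂ[X]) → ℂ by: Ψ((k,f),(m,g)) = 0 if k + m ≠ 0; Ψ((k,f),(−k,g)) = ∑_{i=1}^{k} f(−i)·g(k−i) if k ≥ 0 (an empty sum for k = 0); and Ψ((k,f),(−k,g)) = −∑_{i=1}^{−k} g(−i)·f(−k−i) if k < 0. Then Ψ is bilinear in the polynomial arguments, alternating, and satisfies the 2-cocycle identity: for all (k₁,f), (k₂,g), (k₃,h) ∈ ℤ × ℂ[X], Ψ([(k₁,f),(k₂,g)], (k₃,h)) + Ψ([(k₂,g),(k₃,h)], (k₁,f)) + Ψ([(k₃,h),(k₁,f)], (k₂,g)) = 0. -/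

import Mathlib

open Polynomial Finset

/-- The bracket on pairs `(k, f) ∈ ℤ × ℂ[X]` induced by the commutator of the differential
operators `t^{k₁}f(D)` and `t^{k₂}g(D)` on `ℂ[t,t⁻¹]`. -/
noncomputable def dBracket (x y : ℤ × Polynomial ℂ) : ℤ × Polynomial ℂ :=
  (x.1 + y.1,
    x.2.comp (X + C ((y.1 : ℤ) : ℂ)) * y.2 - y.2.comp (X + C ((x.1 : ℤ) : ℂ)) * x.2)

/-- The Kac–Peterson 2-cocycle on `ℤ × ℂ[X]`. -/
noncomputable def Psi (x y : ℤ × Polynomial ℂ) : ℂ :=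
  if x.1 + y.1 ≠ 0 then 0
  else if 0 ≤ x.1 then
    ∑ i ∈ Icc 1 x.1.toNat, x.2.eval (-(i : ℂ)) * y.2.eval ((x.1 : ℂ) - (i : ℂ))
  else
    -∑ i ∈ Icc 1 (-x.1).toNat, y.2.eval (-(i : ℂ)) * x.2.eval (-(x.1 : ℂ) - (i : ℂ))

/-- Signed interval sum of a function `φ : ℤ → ℂ` over `[a, b)`. -/
noncomputable def PsiT (φ : ℤ → ℂ) (a b : ℤ) : ℂ :=
  (∑ j ∈ Finset.Ico a b, φ j) - ∑ j ∈ Finset.Ico b a, φ j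

lemma psiT_sum_Ico_cons (φ : ℤ → ℂ) {a b c : ℤ} (h1 : a ≤ b) (h2 : b ≤ c) :
    ∑ j ∈ Ico a b, φ j + ∑ j ∈ Ico b c, φ j = ∑ j ∈ Ico a c, φ j := by
  rw [← Finset.Ico_union_Ico_eq_Ico h1 h2,
    Finset.sum_union (Finset.Ico_disjoint_Ico_consecutive a b c)]

lemma PsiT_chasles (φ : ℤ → ℂ) (a b c : ℤ) : PsiT φ a b + PsiT φ b c = PsiT φ a c := by
  unfold PsiT
  rcases le_total a b with hab | hab <;> rcases le_total b c with hbc | hbc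
  · rw [Finset.Ico_eq_empty (show ¬ b < a by omega),
      Finset.Ico_eq_empty (show ¬ c < b by omega),
      Finset.Ico_eq_empty (show ¬ c < a by omega)]
    simp only [Finset.sum_empty]
    linear_combination psiT_sum_Ico_cons φ hab hbc
  · rcases le_total a c with hac | hac
    · rw [Finset.Ico_eq_empty (show ¬ b < a by omega),
        Finset.Ico_eq_empty (show ¬ b < c by omega),
        Finset.Ico_eq_empty (show ¬ c < a by omega)]
      simp only [Finset.sum_empty]
      linear_combination - psiT_sum_Ico_cons φ hac hbc
    · rw [Finset.Ico_eq_empty (show ¬ b < a by omega),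
        Finset.Ico_eq_empty (show ¬ b < c by omega),
        Finset.Ico_eq_empty (show ¬ a < c by omega)]
      simp only [Finset.sum_empty]
      linear_combination psiT_sum_Ico_cons φ hac hab
  · rcases le_total a c with hac | hac
    · rw [Finset.Ico_eq_empty (show ¬ a < b by omega),
        Finset.Ico_eq_empty (show ¬ c < b by omega),
        Finset.Ico_eq_empty (show ¬ c < a by omega)]
      simp only [Finset.sum_empty]
      linear_combination - psiT_sum_Ico_cons φ hab hac
    · rw [Finset.Ico_eq_empty (show ¬ a < b by omega),
        Finset.Ico_eq_empty (show ¬ c < b by omega),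
        Finset.Ico_eq_empty (show ¬ a < c by omega)]
      simp only [Finset.sum_empty]
      linear_combination psiT_sum_Ico_cons φ hbc hac
  · rw [Finset.Ico_eq_empty (show ¬ a < b by omega),
      Finset.Ico_eq_empty (show ¬ b < c by omega),
      Finset.Ico_eq_empty (show ¬ a < c by omega)]
    simp only [Finset.sum_empty]
    linear_combination - psiT_sum_Ico_cons φ hbc hab

lemma PsiT_self (φ : ℤ → ℂ) (a : ℤ) : PsiT φ a a = 0 := by simp [PsiT]

lemma PsiT_congr {φ ψ : ℤ → ℂ} (h : ∀ j, φ j = ψ j) (a b : ℤ) : PsiT φ a b = PsiT ψ a b := by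
  unfold PsiT
  simp only [h]

lemma PsiT_sub (φ ψ : ℤ → ℂ) (a b : ℤ) :
    PsiT (fun j => φ j - ψ j) a b = PsiT φ a b - PsiT ψ a b := by
  unfold PsiT
  rw [Finset.sum_sub_distrib, Finset.sum_sub_distrib]
  ring

lemma PsiT_add (φ ψ : ℤ → ℂ) (a b : ℤ) :
    PsiT (fun j => φ j + ψ j) a b = PsiT φ a b + PsiT ψ a b := by
  unfold PsiT
  rw [Finset.sum_add_distrib, Finset.sum_add_distrib]
  ring

lemma PsiT_mul (c : ℂ) (φ : ℤ → ℂ) (a b : ℤ) :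
    PsiT (fun j => c * φ j) a b = c * PsiT φ a b := by
  unfold PsiT
  rw [← Finset.mul_sum, ← Finset.mul_sum]
  ring

lemma PsiT_shift (φ : ℤ → ℂ) (c a b : ℤ) :
    PsiT (fun j => φ (j + c)) a b = PsiT φ (a + c) (b + c) := by
  unfold PsiT
  rw [← Finset.map_add_right_Ico a b c, ← Finset.map_add_right_Ico b a c,
    Finset.sum_map, Finset.sum_map]
  rfl

/-- `Psi` expressed as a signed interval sum. -/
lemma Psi_eq (k m : ℤ) (f g : Polynomial ℂ) :
    Psi (k, f) (m, g) =
      if k + m = 0 then PsiT (fun j => f.eval (j : ℂ) * g.eval ((j : ℂ) + (k : ℂ))) (-k) 0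
      else 0 := by
  unfold Psi PsiT
  by_cases h : k + m = 0
  · simp only [h, if_pos, ne_eq, not_true_eq_false, if_false, if_true, not_false_eq_true]
    by_cases hk : 0 ≤ k
    · rw [if_pos hk, Finset.Ico_eq_empty (show ¬ (0:ℤ) < -k by omega), Finset.sum_empty,
        sub_zero]
      refine Finset.sum_nbij' (fun i => -(i : ℤ)) (fun j => (-j).toNat) ?_ ?_ ?_ ?_ ?_
      · intro a ha
        simp only [Finset.mem_Icc] at ha
        simp only [Finset.mem_Ico]
        omega
      · intro a ha
        simp only [Finset.mem_Ico] at ha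
        simp only [Finset.mem_Icc]
        omega
      · intro a ha; simp only [Finset.mem_Icc] at ha; omega
      · intro a ha; simp only [Finset.mem_Ico] at ha; omega
      · intro a ha
        simp only [Finset.mem_Icc] at ha
        push_cast
        ring_nf
    · rw [if_neg hk, Finset.Ico_eq_empty (show ¬ -k < (0:ℤ) by omega), Finset.sum_empty,
        zero_sub, neg_inj]
      refine Finset.sum_nbij' (fun i => -k - (i : ℤ)) (fun j => (-k - j).toNat) ?_ ?_ ?_ ?_ ?_
      · intro a ha
        simp only [Finset.mem_Icc] at ha
        simp only [Finset.mem_Ico]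
        omega
      · intro a ha
        simp only [Finset.mem_Ico] at ha
        simp only [Finset.mem_Icc]
        omega
      · intro a ha; simp only [Finset.mem_Icc] at ha; omega
      · intro a ha; simp only [Finset.mem_Ico] at ha; omega
      · intro a ha
        simp only [Finset.mem_Icc] at ha
        push_cast
        ring_nf
  · simp [h]

/-- The abstract telescoping identity behind the cocycle condition. -/
lemma psi_key (k₁ k₂ : ℤ) (A B C : ℤ → ℂ) :
    PsiT (fun j => (A (j + k₂) * B j - B (j + k₁) * A j) * C (j + (k₁ + k₂))) (-(k₁ + k₂)) 0
      + PsiT (fun j => (B (j - (k₁ + k₂)) * C j - C (j + k₂) * B j) * A (j - k₁)) k₁ 0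
      + PsiT (fun j => (C (j + k₁) * A j - A (j - (k₁ + k₂)) * C j) * B (j - k₂)) k₂ 0 = 0 := by
  set φA : ℤ → ℂ := fun j => A j * B (j - k₂) * C (j + k₁) with hφA
  set φB : ℤ → ℂ := fun j => A j * B (j + k₁) * C (j + (k₁ + k₂)) with hφB
  have e1 : PsiT (fun j => (A (j + k₂) * B j - B (j + k₁) * A j) * C (j + (k₁ + k₂)))
      (-(k₁ + k₂)) 0 = PsiT φA (-k₁) k₂ - PsiT φB (-(k₁ + k₂)) 0 := by
    rw [PsiT_congr (ψ := fun j => φA (j + k₂) - φB j)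
      (fun j => by simp only [hφA, hφB]; ring_nf), PsiT_sub, PsiT_shift]
    norm_num
  have e2 : PsiT (fun j => (B (j - (k₁ + k₂)) * C j - C (j + k₂) * B j) * A (j - k₁)) k₁ 0
      = PsiT φA 0 (-k₁) - PsiT φB 0 (-k₁) := by
    rw [PsiT_congr (ψ := fun j => φA (j + -k₁) - φB (j + -k₁))
      (fun j => by simp only [hφA, hφB]; ring_nf), PsiT_sub, PsiT_shift, PsiT_shift]
    norm_num
  have e3 : PsiT (fun j => (C (j + k₁) * A j - A (j - (k₁ + k₂)) * C j) * B (j - k₂)) k₂ 0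
      = PsiT φA k₂ 0 - PsiT φB (-k₁) (-(k₁ + k₂)) := by
    rw [PsiT_congr (ψ := fun j => φA j - φB (j + -(k₁ + k₂)))
      (fun j => by simp only [hφA, hφB]; ring_nf), PsiT_sub, PsiT_shift]
    norm_num
  rw [e1, e2, e3]
  have cA : PsiT φA 0 (-k₁) + PsiT φA (-k₁) k₂ + PsiT φA k₂ 0 = 0 := by
    rw [PsiT_chasles, PsiT_chasles, PsiT_self]
  have cB : PsiT φB 0 (-k₁) + PsiT φB (-k₁) (-(k₁ + k₂)) + PsiT φB (-(k₁ + k₂)) 0 = 0 := by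
    rw [PsiT_chasles, PsiT_chasles, PsiT_self]
  linear_combination cA - cB

/-- `Ψ` is bilinear in the polynomial arguments, alternating, and satisfies the 2-cocycle
identity with respect to the bracket `dBracket`. -/
theorem Psi_is_two_cocycle :
    (∀ (k m : ℤ) (a : ℂ) (f f' g : Polynomial ℂ),
      Psi (k, a • f + f') (m, g) = a * Psi (k, f) (m, g) + Psi (k, f') (m, g)) ∧
    (∀ (k m : ℤ) (a : ℂ) (f g g' : Polynomial ℂ),
      Psi (k, f) (m, a • g + g') = a * Psi (k, f) (m, g) + Psi (k, f) (m, g')) ∧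
    (∀ x : ℤ × Polynomial ℂ, Psi x x = 0) ∧
    (∀ x y z : ℤ × Polynomial ℂ,
      Psi (dBracket x y) z + Psi (dBracket y z) x + Psi (dBracket z x) y = 0) := by
  refine ⟨?_, ?_, ?_, ?_⟩
  · intro k m a f f' g
    rw [Psi_eq, Psi_eq, Psi_eq]
    by_cases h : k + m = 0
    · rw [if_pos h, if_pos h, if_pos h,
        PsiT_congr (ψ := fun j => a * (f.eval (j : ℂ) * g.eval ((j : ℂ) + (k : ℂ)))
            + f'.eval (j : ℂ) * g.eval ((j : ℂ) + (k : ℂ)))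
          (fun j => by simp [smul_eq_mul]; ring), PsiT_add, PsiT_mul]
    · rw [if_neg h, if_neg h, if_neg h]; ring
  · intro k m a f g g'
    rw [Psi_eq, Psi_eq, Psi_eq]
    by_cases h : k + m = 0
    · rw [if_pos h, if_pos h, if_pos h,
        PsiT_congr (ψ := fun j => a * (f.eval (j : ℂ) * g.eval ((j : ℂ) + (k : ℂ)))
            + f.eval (j : ℂ) * g'.eval ((j : ℂ) + (k : ℂ)))
          (fun j => by simp [smul_eq_mul]; ring), PsiT_add, PsiT_mul]
    · rw [if_neg h, if_neg h, if_neg h]; ring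
  · rintro ⟨k, f⟩
    rw [Psi_eq]
    split_ifs with h
    · obtain rfl : k = 0 := by omega
      simpa using PsiT_self _ 0
    · rfl
  · rintro ⟨k₁, f⟩ ⟨k₂, g⟩ ⟨k₃, h⟩
    simp only [dBracket]
    rw [Psi_eq, Psi_eq, Psi_eq]
    by_cases htot : k₁ + k₂ + k₃ = 0
    · obtain rfl : k₃ = -k₁ - k₂ := by omega
      rw [if_pos (by ring), if_pos (by ring), if_pos (by ring)]
      have e1 : PsiT (fun j => (f.comp (X + C ((k₂ : ℤ) : ℂ)) * g
            - g.comp (X + C ((k₁ : ℤ) : ℂ)) * f).eval (j : ℂ)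
            * h.eval ((j : ℂ) + ((k₁ + k₂ : ℤ) : ℂ))) (-(k₁ + k₂)) 0
          = PsiT (fun j => ((fun j : ℤ => f.eval (j : ℂ)) (j + k₂)
              * (fun j : ℤ => g.eval (j : ℂ)) j
              - (fun j : ℤ => g.eval (j : ℂ)) (j + k₁) * (fun j : ℤ => f.eval (j : ℂ)) j)
              * (fun j : ℤ => h.eval (j : ℂ)) (j + (k₁ + k₂))) (-(k₁ + k₂)) 0 := by
        refine PsiT_congr (fun j => ?_) _ _
        simp only [eval_sub, eval_mul, eval_comp, eval_add, eval_X, eval_C]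
        push_cast
        ring
      have e2 : PsiT (fun j => (g.comp (X + C ((-k₁ - k₂ : ℤ) : ℂ)) * h
            - h.comp (X + C ((k₂ : ℤ) : ℂ)) * g).eval (j : ℂ)
            * f.eval ((j : ℂ) + ((k₂ + (-k₁ - k₂) : ℤ) : ℂ))) (-(k₂ + (-k₁ - k₂))) 0
          = PsiT (fun j => ((fun j : ℤ => g.eval (j : ℂ)) (j - (k₁ + k₂))
              * (fun j : ℤ => h.eval (j : ℂ)) j
              - (fun j : ℤ => h.eval (j : ℂ)) (j + k₂) * (fun j : ℤ => g.eval (j : ℂ)) j)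
              * (fun j : ℤ => f.eval (j : ℂ)) (j - k₁)) k₁ 0 := by
        rw [show -(k₂ + (-k₁ - k₂)) = k₁ by ring]
        refine PsiT_congr (fun j => ?_) _ _
        simp only [eval_sub, eval_mul, eval_comp, eval_add, eval_X, eval_C]
        push_cast
        ring
      have e3 : PsiT (fun j => (h.comp (X + C ((k₁ : ℤ) : ℂ)) * f
            - f.comp (X + C ((-k₁ - k₂ : ℤ) : ℂ)) * h).eval (j : ℂ)
            * g.eval ((j : ℂ) + (((-k₁ - k₂) + k₁ : ℤ) : ℂ))) (-((-k₁ - k₂) + k₁)) 0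
          = PsiT (fun j => ((fun j : ℤ => h.eval (j : ℂ)) (j + k₁)
              * (fun j : ℤ => f.eval (j : ℂ)) j
              - (fun j : ℤ => f.eval (j : ℂ)) (j - (k₁ + k₂))
              * (fun j : ℤ => h.eval (j : ℂ)) j)
              * (fun j : ℤ => g.eval (j : ℂ)) (j - k₂)) k₂ 0 := by
        rw [show -((-k₁ - k₂) + k₁) = k₂ by ring]
        refine PsiT_congr (fun j => ?_) _ _
        simp only [eval_sub, eval_mul, eval_comp, eval_add, eval_X, eval_C]
        push_cast
        ring
      rw [e1, e2, e3]
      exact psi_key k₁ k₂ (fun j => f.eval (j : ℂ)) (fun j => g.eval (j : ℂ))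
        (fun j => h.eval (j : ℂ))
    · rw [if_neg (by omega), if_neg (by omega), if_neg (by omega)]
      ring
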